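/- None of the topological groups (G, τ), (S, τ|S) and the quotient group G/S (with the quotient topology) is FSIN: each of them admits a bounded left uniformly continuous real-valued function that is not right uniformly continuous. -/

import Mathlib

/-- The Samuel (precompact) uniformity on `ℕ`: a basis of entourages is given by the sets
`⋃ i, A i × A i` for `{A 1, …, A n}` a finite partition of `ℕ`; equivalently, it is the
infimum of the uniformities pulled back from finite discrete uniform spaces, a basis being
given by the sets `{(x, y) | c x = c y}` for `c : ℕ → Fin n`. -/
noncomputable def samuelNat : UniformSpace ℕ :=
  ⨅ (n : ℕ) (c : ℕ → Fin n), UniformSpace.comap c ⊥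

/-- The topology `τ` on `G = Sym(ℕ)`: the topology of uniform convergence when the target `ℕ`
carries the Samuel uniformity.  A basis of neighborhoods of the identity is given by the
subgroups `H_π = {g : g (A i) = A i, i = 1, …, n}`, `π = {A 1, …, A n}` a finite partition
of `ℕ`. -/
noncomputable def tauPerm : TopologicalSpace (Equiv.Perm ℕ) :=
  TopologicalSpace.induced (fun g => UniformFun.ofFun (⇑g))
    (@UniformFun.uniformSpace ℕ ℕ samuelNat).toTopologicalSpace

/-- The subgroup `S` of finitary permutations of `ℕ`, i.e. those moving only finitely many
points. -/
def finitaryS : Subgroup (Equiv.Perm ℕ) where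
  carrier := {g | {x | g x ≠ x}.Finite}
  one_mem' := by simp
  mul_mem' := by
    intro a b ha hb
    refine (ha.union hb).subset fun x hx => ?_
    by_cases h : b x = x
    · exact Or.inl (by simpa [Equiv.Perm.mul_apply, h] using hx)
    · exact Or.inr h
  inv_mem' := by
    intro a ha
    have h : {x | a⁻¹ x ≠ x} = {x | a x ≠ x} := by
      ext x
      simp only [Set.mem_setOf_eq, ne_eq, Equiv.Perm.inv_eq_iff_eq]
      exact not_congr eq_comm
    show {x | a⁻¹ x ≠ x}.Finite
    rw [h]; exact ha

/-- Right uniform continuity of `f : G → Y`: a basis of the right uniformity of a topological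
group `G` is given by the sets `{(g, h) : g * h⁻¹ ∈ U}`, `U` a neighborhood of the identity. -/
def RightUC {G : Type*} [Group G] (t : TopologicalSpace G) {Y : Type*} [UniformSpace Y]
    (f : G → Y) : Prop :=
  ∀ V ∈ uniformity Y, ∃ U ∈ @nhds G t 1, ∀ g h : G, g * h⁻¹ ∈ U → (f g, f h) ∈ V

/-- Left uniform continuity of `f : G → Y`: a basis of the left uniformity of a topological
group `G` is given by the sets `{(g, h) : g⁻¹ * h ∈ U}`, `U` a neighborhood of the identity. -/
def LeftUC {G : Type*} [Group G] (t : TopologicalSpace G) {Y : Type*} [UniformSpace Y]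
    (f : G → Y) : Prop :=
  ∀ V ∈ uniformity Y, ∃ U ∈ @nhds G t 1, ∀ g h : G, g⁻¹ * h ∈ U → (f g, f h) ∈ V

/-- `f : G → Y` is right proximally continuous: for every bounded uniformly continuous
`φ : Y → ℝ`, the composition `φ ∘ f` is right uniformly continuous. -/
def RightProxCont {G : Type*} [Group G] (t : TopologicalSpace G) {Y : Type*} [UniformSpace Y]
    (f : G → Y) : Prop :=
  ∀ φ : Y → ℝ, UniformContinuous φ → (∃ C, ∀ y, |φ y| ≤ C) → RightUC t (φ ∘ f)

/-- `S` is a normal subgroup of `G`. -/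
instance finitaryS_normal : finitaryS.Normal := by
  constructor
  intro h hh g
  have hsub : {x | (g * h * g⁻¹) x ≠ x} ⊆ (fun x => g⁻¹ x) ⁻¹' {x | h x ≠ x} := by
    intro x hx hc
    apply hx
    simp only [Equiv.Perm.mul_apply, hc]; exact g.apply_symm_apply x
  exact (hh.preimage (fun y _ z _ hyz => (Equiv.injective g⁻¹) hyz)).subset hsub

/-- A topological group fails to be FSIN if it admits a bounded left uniformly continuous
real-valued function which is not right uniformly continuous. -/
def NotFSIN {G : Type*} [Group G] (t : TopologicalSpace G) : Prop :=
  ∃ f : G → ℝ, (∃ C, ∀ g, |f g| ≤ C) ∧ LeftUC t f ∧ ¬RightUC t f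

/-! ### Basic neighborhoods for `tauPerm` -/

theorem samuel_eq : @uniformity ℕ samuelNat
    = ⨅ (i : Σ n : ℕ, ℕ → Fin n), Filter.principal {p : ℕ × ℕ | i.2 p.1 = i.2 p.2} := by
  rw [iInf_sigma]
  rw [samuelNat, iInf_uniformity]
  refine iInf_congr fun n => ?_
  rw [iInf_uniformity]
  refine iInf_congr fun c => ?_
  rw [uniformity_comap, bot_uniformity, Filter.comap_principal]
  rfl

theorem samuel_mem (s : Set (ℕ × ℕ)) : s ∈ @uniformity ℕ samuelNat ↔
    ∃ (n : ℕ) (c : ℕ → Fin n), {p : ℕ × ℕ | c p.1 = c p.2} ⊆ s := by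
  rw [samuel_eq]
  have hd : Directed (· ≥ ·) (fun i : Σ n : ℕ, ℕ → Fin n =>
      Filter.principal {p : ℕ × ℕ | i.2 p.1 = i.2 p.2}) := by
    rintro ⟨n1, c1⟩ ⟨n2, c2⟩
    refine ⟨⟨n1 * n2, fun x => finProdFinEquiv (c1 x, c2 x)⟩, ?_, ?_⟩ <;>
      · simp only [ge_iff_le, Filter.principal_mono]
        intro p hp
        have := finProdFinEquiv.injective hp
        simp only [Prod.mk.injEq] at this
        simp [Set.mem_setOf_eq, this.1, this.2]
  haveI : Nonempty (Σ n : ℕ, ℕ → Fin n) := ⟨⟨1, fun _ => 0⟩⟩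
  rw [Filter.mem_iInf_of_directed hd]
  simp [Sigma.exists]

theorem perm_apply_inv_self (f : Equiv.Perm ℕ) (x : ℕ) : f (f⁻¹ x) = x :=
  f.apply_symm_apply x

def Uc {n : ℕ} (c : ℕ → Fin n) : Set (Equiv.Perm ℕ) := {g | ∀ x, c (g x) = c x}

theorem one_mem_Uc {n : ℕ} (c : ℕ → Fin n) : (1 : Equiv.Perm ℕ) ∈ Uc c := fun _ => rfl

theorem mul_mem_Uc {n : ℕ} {c : ℕ → Fin n} {a b : Equiv.Perm ℕ}
    (ha : a ∈ Uc c) (hb : b ∈ Uc c) : a * b ∈ Uc c := by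
  intro x
  rw [Equiv.Perm.mul_apply]
  rw [ha (b x), hb x]

theorem inv_mem_Uc {n : ℕ} {c : ℕ → Fin n} {a : Equiv.Perm ℕ} (ha : a ∈ Uc c) :
    a⁻¹ ∈ Uc c := by
  intro x
  have := ha (a⁻¹ x)
  rw [perm_apply_inv_self] at this
  exact this.symm

theorem coset_mem_nhds {n : ℕ} (c : ℕ → Fin n) (g : Equiv.Perm ℕ) :
    {h : Equiv.Perm ℕ | ∀ x, c (h x) = c (g x)} ∈ @nhds _ tauPerm g := by
  letI : UniformSpace ℕ := samuelNat
  rw [tauPerm, nhds_induced]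
  refine Filter.mem_comap.2 ⟨{f : UniformFun ℕ ℕ | ∀ x, c (UniformFun.toFun f x) = c (g x)}, ?_, ?_⟩
  · rw [nhds_eq_comap_uniformity]
    refine Filter.mem_comap.2 ⟨UniformFun.gen ℕ ℕ {p : ℕ × ℕ | c p.1 = c p.2}, ?_, ?_⟩
    · apply (UniformFun.hasBasis_uniformity ℕ ℕ).mem_of_mem
      rw [samuel_mem]
      exact ⟨n, c, subset_rfl⟩
    · intro f hf x
      exact (hf x).symm
  · intro h hh x
    exact hh x

theorem Uc_mem_nhds {n : ℕ} (c : ℕ → Fin n) : Uc c ∈ @nhds _ tauPerm 1 :=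
  coset_mem_nhds c 1

theorem exists_Uc_subset {U : Set (Equiv.Perm ℕ)} (hU : U ∈ @nhds _ tauPerm 1) :
    ∃ (n : ℕ) (c : ℕ → Fin n), Uc c ⊆ U := by
  letI : UniformSpace ℕ := samuelNat
  rw [tauPerm, nhds_induced, Filter.mem_comap] at hU
  obtain ⟨W, hW, hWU⟩ := hU
  rw [nhds_eq_comap_uniformity, Filter.mem_comap] at hW
  obtain ⟨V, hV, hVW⟩ := hW
  obtain ⟨V', hV', hgen⟩ := (UniformFun.hasBasis_uniformity ℕ ℕ).mem_iff.1 hV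
  obtain ⟨n, c, hc⟩ := (samuel_mem V').1 hV'
  refine ⟨n, c, fun g hg => ?_⟩
  apply hWU
  apply hVW
  apply hgen
  intro x
  exact hc (hg x).symm

theorem exists_infinite_fiber {n : ℕ} (c : ℕ → Fin n) : ∃ k, {x | c x = k}.Infinite := by
  by_contra hfin
  push_neg at hfin
  have : (Set.univ : Set ℕ) = ⋃ k, {x | c x = k} := by
    ext x; simp
  exact Set.infinite_univ (α := ℕ) (this ▸ Set.finite_iUnion hfin)


open Classical in
/-- maps the `d`-fiber of `d x` to the `c`-fiber of `d x`, preserving enumeration order. -/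
noncomputable def recolor {m : ℕ} (d c : ℕ → Fin m) : ℕ → ℕ := fun x =>
  Nat.nth (fun y => c y = d x) (Nat.count (fun y => d y = d x) x)

open Classical in
theorem recolor_spec {m : ℕ} (d c : ℕ → Fin m)
    (hc : ∀ k, {y | c y = k}.Infinite) (x : ℕ) : c (recolor d c x) = d x :=
  Nat.nth_mem_of_infinite (p := fun y => c y = d x) (hc (d x)) _

open Classical in
theorem recolor_recolor {m : ℕ} (d c : ℕ → Fin m)
    (hd : ∀ k, {y | d y = k}.Infinite) (hc : ∀ k, {y | c y = k}.Infinite) (x : ℕ) :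
    recolor c d (recolor d c x) = x := by
  have h1 : c (Nat.nth (fun y => c y = d x) (Nat.count (fun y => d y = d x) x)) = d x :=
    recolor_spec d c hc x
  unfold recolor
  simp only [h1]
  rw [Nat.count_nth_of_infinite (hc (d x))]
  exact Nat.nth_count (p := fun y => d y = d x) (by simp)

/-- A permutation sending each `d`-fiber to the corresponding `c`-fiber. -/
noncomputable def recolorPerm {m : ℕ} (d c : ℕ → Fin m)
    (hd : ∀ k, {y | d y = k}.Infinite) (hc : ∀ k, {y | c y = k}.Infinite) :
    Equiv.Perm ℕ where
  toFun := recolor d c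
  invFun := recolor c d
  left_inv := recolor_recolor d c hd hc
  right_inv := recolor_recolor c d hc hd

theorem recolorPerm_spec {m : ℕ} (d c : ℕ → Fin m)
    (hd : ∀ k, {y | d y = k}.Infinite) (hc : ∀ k, {y | c y = k}.Infinite) (x : ℕ) :
    c (recolorPerm d c hd hc x) = d x := recolor_spec d c hc x

section PermOnSet
variable (p : ℕ → Prop) [DecidablePred p] (hp : {x | p x}.Infinite) (ρ : Equiv.Perm ℕ)

/-- The permutation acting on `{x | p x}` as `ρ` acts on indices, identity elsewhere. -/
noncomputable def permOnSet : Equiv.Perm ℕ where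
  toFun x := if p x then Nat.nth p (ρ (Nat.count p x)) else x
  invFun x := if p x then Nat.nth p (ρ.symm (Nat.count p x)) else x
  left_inv := by
    intro x
    by_cases hx : p x
    · have h1 : p (Nat.nth p (ρ (Nat.count p x))) := Nat.nth_mem_of_infinite hp _
      simp only [hx, if_pos, h1, Nat.count_nth_of_infinite hp, Equiv.symm_apply_apply]
      exact Nat.nth_count hx
    · simp only [hx, if_neg, not_false_iff, if_neg hx]
  right_inv := by
    intro x
    by_cases hx : p x
    · have h1 : p (Nat.nth p (ρ.symm (Nat.count p x))) := Nat.nth_mem_of_infinite hp _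
      simp only [hx, if_pos, h1, Nat.count_nth_of_infinite hp, Equiv.apply_symm_apply]
      exact Nat.nth_count hx
    · simp only [hx, if_neg, not_false_iff, if_neg hx]

theorem permOnSet_apply_of_pos {x : ℕ} (hx : p x) :
    permOnSet p hp ρ x = Nat.nth p (ρ (Nat.count p x)) := if_pos hx

theorem permOnSet_apply_of_neg {x : ℕ} (hx : ¬ p x) : permOnSet p hp ρ x = x := if_neg hx

theorem permOnSet_inv_apply_of_pos {x : ℕ} (hx : p x) :
    (permOnSet p hp ρ)⁻¹ x = Nat.nth p (ρ.symm (Nat.count p x)) := if_pos hx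

theorem permOnSet_inv_apply_of_neg {x : ℕ} (hx : ¬ p x) : (permOnSet p hp ρ)⁻¹ x = x :=
  if_neg hx

theorem permOnSet_mem_of_pos {x : ℕ} (hx : p x) : p (permOnSet p hp ρ x) := by
  rw [permOnSet_apply_of_pos p hp ρ hx]; exact Nat.nth_mem_of_infinite hp _

theorem permOnSet_inv_mem_of_pos {x : ℕ} (hx : p x) : p ((permOnSet p hp ρ)⁻¹ x) := by
  rw [permOnSet_inv_apply_of_pos p hp ρ hx]; exact Nat.nth_mem_of_infinite hp _

end PermOnSet


def pat3 : ℕ → Fin 3 := fun i => ⟨i % 3, by omega⟩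
def pat6 : ℕ → Fin 3 := fun i => ⟨i % 6 / 2, by omega⟩

theorem pat3_fibers (k : Fin 3) : {y | pat3 y = k}.Infinite := by
  apply Set.infinite_of_injective_forall_mem (f := fun j : ℕ => 3 * j + k.val)
  · intro a b hab; simp only at hab; omega
  · intro j
    simp only [Set.mem_setOf_eq, pat3]
    have := k.isLt
    exact Fin.ext (by simp only; omega)

theorem pat6_fibers (k : Fin 3) : {y | pat6 y = k}.Infinite := by
  apply Set.infinite_of_injective_forall_mem (f := fun j : ℕ => 6 * j + 2 * k.val)
  · intro a b hab; simp only at hab; omega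
  · intro j
    simp only [Set.mem_setOf_eq, pat6]
    have := k.isLt
    exact Fin.ext (by simp only; omega)

/-- recoloring along the set `p` by the pattern `pat`, color `2` off `p`. -/
noncomputable def dOf (p : ℕ → Prop) [DecidablePred p] (pat : ℕ → Fin 3) : ℕ → Fin 3 :=
  fun x => if p x then pat (Nat.count p x) else 2

theorem dOf_fibers (p : ℕ → Prop) [DecidablePred p] (hp : {x | p x}.Infinite)
    (pat : ℕ → Fin 3) (hpat : ∀ k, {i | pat i = k}.Infinite) (k : Fin 3) :
    {y | dOf p pat y = k}.Infinite := by
  have : Nat.nth p '' {i | pat i = k} ⊆ {y | dOf p pat y = k} := by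
    rintro y ⟨i, hi, rfl⟩
    have h1 : p (Nat.nth p i) := Nat.nth_mem_of_infinite hp i
    simp only [Set.mem_setOf_eq, dOf, if_pos h1, Nat.count_nth_of_infinite hp]
    exact hi
  exact Set.Infinite.mono this (((hpat k).image (Set.injOn_of_injective
    (Nat.nth_injective hp))))

def Good (d : ℕ → Fin 3) (x : ℕ) : Prop :=
  d x = 0 ∧ ∃ y, x < y ∧ d y = 0 ∧ ∀ z, x < z → z < y → d z = 2

open Classical in
noncomputable def F1 (d : ℕ → Fin 3) : ℝ := if {x | Good d x}.Infinite then 1 else 0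

theorem F1_bound (d : ℕ → Fin 3) : |F1 d| ≤ 1 := by
  unfold F1; split <;> simp

theorem good_of_good {d1 d2 : ℕ → Fin 3} {m x : ℕ} (h : ∀ w, m < w → d1 w = d2 w)
    (hx : m < x) (hg : Good d1 x) : Good d2 x := by
  obtain ⟨h0, y, hxy, hy0, hz⟩ := hg
  exact ⟨(h x hx) ▸ h0, y, hxy, (h y (hx.trans hxy)) ▸ hy0,
    fun z hz1 hz2 => (h z (hx.trans hz1)) ▸ hz z hz1 hz2⟩

theorem F1_congr {d1 d2 : ℕ → Fin 3} (h : {x | d1 x ≠ d2 x}.Finite) : F1 d1 = F1 d2 := by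
  obtain ⟨m, hm⟩ := h.bddAbove
  have key : ∀ (e1 e2 : ℕ → Fin 3), (∀ w, m < w → e1 w = e2 w) →
      {x | Good e1 x}.Infinite → {x | Good e2 x}.Infinite := by
    intro e1 e2 he h1
    refine (h1.diff (Set.finite_Iic m)).mono ?_
    rintro x ⟨hg, hxm⟩
    simp only [Set.mem_Iic, not_le] at hxm
    exact good_of_good he hxm hg
  have hmm : ∀ w, m < w → d1 w = d2 w := by
    intro w hw
    by_contra hne
    exact absurd (hm hne) (by omega)
  unfold F1
  by_cases h1 : {x | Good d1 x}.Infinite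
  · rw [if_pos h1, if_pos (key d1 d2 hmm h1)]
  · rw [if_neg h1, if_neg (fun h2 => h1 (key d2 d1 (fun w hw => (hmm w hw).symm) h2))]

section
variable (p : ℕ → Prop) [DecidablePred p] (hp : {x | p x}.Infinite)
include hp

theorem count_lt_count {x y : ℕ} (hx : p x) (hy : p y) (hxy : x < y) :
    Nat.count p x < Nat.count p y := by
  have h1 : Nat.nth p (Nat.count p x) = x := Nat.nth_count hx
  have h2 : Nat.nth p (Nat.count p y) = y := Nat.nth_count hy
  by_contra hle
  push_neg at hle
  have h3 : y ≤ x := by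
    calc y = Nat.nth p (Nat.count p y) := h2.symm
    _ ≤ Nat.nth p (Nat.count p x) := Nat.nth_monotone hp hle
    _ = x := h1
  omega

theorem F1_pat3 : F1 (dOf p pat3) = 0 := by
  have : {x | Good (dOf p pat3) x} = ∅ := by
    ext x
    simp only [Set.mem_setOf_eq, Set.mem_empty_iff_false, iff_false]
    rintro ⟨h0, y, hxy, hy0, hz⟩
    have hpx : p x := by
      by_contra hpx
      rw [dOf, if_neg hpx] at h0
      exact absurd h0 (by decide)
    have hpy : p y := by
      by_contra hpy
      rw [dOf, if_neg hpy] at hy0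
      exact absurd hy0 (by decide)
    rw [dOf, if_pos hpx] at h0
    rw [dOf, if_pos hpy] at hy0
    have hx3 : Nat.count p x % 3 = 0 := by
      have := congrArg Fin.val h0; simpa [pat3] using this
    have hy3 : Nat.count p y % 3 = 0 := by
      have := congrArg Fin.val hy0; simpa [pat3] using this
    have hcc : Nat.count p x < Nat.count p y := count_lt_count p hp hpx hpy hxy
    -- take z = nth p (count x + 1)
    set z := Nat.nth p (Nat.count p x + 1) with hzdef
    have hpz : p z := Nat.nth_mem_of_infinite hp _
    have hcz : Nat.count p z = Nat.count p x + 1 := Nat.count_nth_of_infinite hp _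
    have hxz : x < z := by
      conv_lhs => rw [← Nat.nth_count hpx]
      exact Nat.nth_lt_nth hp |>.2 (by omega)
    have hzy : z < y := by
      conv_rhs => rw [← Nat.nth_count hpy]
      exact Nat.nth_lt_nth hp |>.2 (by omega)
    have := hz z hxz hzy
    rw [dOf, if_pos hpz, hcz] at this
    have := congrArg Fin.val this
    simp [pat3] at this
    omega
  rw [F1, if_neg]
  rw [this]
  exact fun h => h Set.finite_empty

theorem F1_pat6 : F1 (dOf p pat6) = 1 := by
  have : (fun i => Nat.nth p (6 * i)) '' Set.univ ⊆ {x | Good (dOf p pat6) x} := by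
    rintro x ⟨i, -, rfl⟩
    have hpx : p (Nat.nth p (6 * i)) := Nat.nth_mem_of_infinite hp _
    have hpy : p (Nat.nth p (6 * i + 1)) := Nat.nth_mem_of_infinite hp _
    refine ⟨?_, Nat.nth p (6 * i + 1), Nat.nth_lt_nth hp |>.2 (by omega), ?_, ?_⟩
    · rw [dOf, if_pos hpx, Nat.count_nth_of_infinite hp]
      exact Fin.ext (by simp [pat6])
    · rw [dOf, if_pos hpy, Nat.count_nth_of_infinite hp]
      exact Fin.ext (by simp [pat6])
    · intro z h1 h2
      have hpz : ¬ p z := by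
        intro hpz
        have c1 : Nat.count p (Nat.nth p (6 * i)) < Nat.count p z :=
          count_lt_count p hp hpx hpz h1
        have c2 : Nat.count p z < Nat.count p (Nat.nth p (6 * i + 1)) :=
          count_lt_count p hp hpz hpy h2
        rw [Nat.count_nth_of_infinite hp] at c1
        rw [Nat.count_nth_of_infinite hp] at c2
        omega
      rw [dOf, if_neg hpz]
  have hinf : {x | Good (dOf p pat6) x}.Infinite := by
    refine Set.Infinite.mono this ?_
    apply Set.infinite_of_injective_forall_mem
      (f := fun i : ℕ => (fun i => Nat.nth p (6 * i)) i)
    · intro a b hab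
      simp only at hab
      have := Nat.nth_injective hp hab
      omega
    · exact fun a => ⟨a, trivial, rfl⟩
  rw [F1, if_pos hinf]

end


def c2 : ℕ → Fin 3 := fun x => if x = 0 then 0 else if x % 2 = 1 then 1 else 2

theorem c2_eq_zero_iff (w : ℕ) : c2 w = 0 ↔ w = 0 := by
  unfold c2
  rcases eq_or_ne w 0 with h | h
  · simp [h]
  · rw [if_neg h]
    split <;> simp [h] <;> decide

def Zset (d : ℕ → Fin 3) : Set (ℕ × ℕ) := {q | q.1 < q.2 ∧ d q.1 = 1 ∧ d q.2 = 0}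

noncomputable def F2 (d : ℕ → Fin 3) : ℝ := ((Zset d).ncard % 2 : ℕ)

theorem F2_bound (d : ℕ → Fin 3) : |F2 d| ≤ 1 := by
  rw [F2, abs_of_nonneg (by positivity)]
  have : (Zset d).ncard % 2 ≤ 1 := by omega
  exact_mod_cast this

theorem Zset_ncard (d : ℕ → Fin 3) (z : ℕ) (hz : ∀ y, d y = 0 ↔ y = z) :
    (Zset d).ncard = {x | x < z ∧ d x = 1}.ncard := by
  have : Zset d = (fun x => (x, z)) '' {x | x < z ∧ d x = 1} := by
    ext ⟨x, y⟩
    simp only [Zset, Set.mem_setOf_eq, Set.mem_image]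
    constructor
    · rintro ⟨h1, h2, h3⟩
      exact ⟨x, ⟨(hz y).1 h3 ▸ h1, h2⟩, by rw [(hz y).1 h3]⟩
    · rintro ⟨x', ⟨hx1, hx2⟩, he⟩
      obtain ⟨rfl, rfl⟩ := Prod.mk.injEq .. ▸ he
      exact ⟨hx1, hx2, (hz z).2 rfl⟩
  rw [this, Set.ncard_image_of_injective _ (fun x y h => (Prod.ext_iff.1 h).1)]

theorem swap_ne_fixed {a b x : ℕ} (h1 : x ≠ a) (h2 : x ≠ b) : Equiv.swap a b x = x :=
  Equiv.swap_apply_of_ne_of_ne h1 h2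

theorem S_witness (a a' : ℕ) (ha : 0 < a) (haa : a + 1 < a') :
    (F2 (fun x => c2 ((Equiv.swap 0 (a+1) * Equiv.swap a (2*a'+3) * Equiv.swap a' (2*a'+4)) x)) = 0
      ∧ F2 (fun x => c2 ((Equiv.swap 0 (a+1) * Equiv.swap a (2*a'+3) * Equiv.swap a' (2*a'+4)) (Equiv.swap a a' x))) = 1)
    ∨ (F2 (fun x => c2 ((Equiv.swap 0 (a+1) * Equiv.swap a (2*a'+3) * Equiv.swap a' (2*a'+4)) x)) = 1
      ∧ F2 (fun x => c2 ((Equiv.swap 0 (a+1) * Equiv.swap a (2*a'+3) * Equiv.swap a' (2*a'+4)) (Equiv.swap a a' x))) = 0) := by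
  set z := a + 1 with hzdef
  set b := 2*a'+3 with hbdef
  set e := 2*a'+4 with hedef
  set π := Equiv.swap 0 z * Equiv.swap a b * Equiv.swap a' e with hπdef
  have hπ : ∀ x, π x = Equiv.swap 0 z (Equiv.swap a b (Equiv.swap a' e x)) := fun x => rfl
  -- evaluate π
  have hπz : π z = 0 := by
    have e1 : Equiv.swap a' e z = z := swap_ne_fixed (by omega) (by omega)
    have e2 : Equiv.swap a b z = z := swap_ne_fixed (by omega) (by omega)
    rw [hπ, e1, e2, Equiv.swap_apply_right]
  have hπa : π a = b := by
    have e1 : Equiv.swap a' e a = a := swap_ne_fixed (by omega) (by omega)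
    have e2 : Equiv.swap 0 z b = b := swap_ne_fixed (by omega) (by omega)
    rw [hπ, e1, Equiv.swap_apply_left, e2]
  have hπa' : π a' = e := by
    have e2 : Equiv.swap a b e = e := swap_ne_fixed (by omega) (by omega)
    have e3 : Equiv.swap 0 z e = e := swap_ne_fixed (by omega) (by omega)
    rw [hπ, Equiv.swap_apply_left, e2, e3]
  set d := fun x => c2 (π x) with hddef
  -- zeros of d
  have hzeros : ∀ y, d y = 0 ↔ y = z := by
    intro y
    rw [hddef]
    simp only
    rw [c2_eq_zero_iff]
    constructor
    · intro h; exact π.injective (h.trans hπz.symm)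
    · rintro rfl; exact hπz
  -- d a = 1
  have hda : d a = 1 := by
    rw [hddef]; simp only; rw [hπa, c2]
    rw [if_neg (by omega), if_pos (by omega)]
  -- d a' ≠ 1
  have hda' : d a' = 2 := by
    rw [hddef]; simp only; rw [hπa', c2]
    rw [if_neg (by omega), if_neg (by omega)]
  set d' := fun x => d (Equiv.swap a a' x) with hd'def
  have hzeros' : ∀ y, d' y = 0 ↔ y = z := by
    intro y
    rw [hd'def]
    simp only
    rw [hzeros]
    constructor
    · intro h
      have : Equiv.swap a a' y = Equiv.swap a a' z := by
        rw [h, swap_ne_fixed (by omega) (by omega)]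
      exact (Equiv.swap a a').injective this
    · rintro rfl; exact swap_ne_fixed (by omega) (by omega)
  -- the 1-sets below z
  have hS' : {x | x < z ∧ d' x = 1} = {x | x < z ∧ d x = 1} \ {a} := by
    ext x
    simp only [Set.mem_setOf_eq, Set.mem_diff, Set.mem_singleton_iff]
    constructor
    · rintro ⟨h1, h2⟩
      rcases eq_or_ne x a with rfl | hxa
      · rw [hd'def] at h2; simp only at h2
        rw [Equiv.swap_apply_left, hda'] at h2
        exact absurd h2 (by decide)
      · rw [hd'def] at h2; simp only at h2
        rw [swap_ne_fixed hxa (by omega)] at h2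
        exact ⟨⟨h1, h2⟩, hxa⟩
    · rintro ⟨⟨h1, h2⟩, hxa⟩
      refine ⟨h1, ?_⟩
      rw [hd'def]; simp only
      rw [swap_ne_fixed hxa (by omega)]
      exact h2
  have hfin : {x | x < z ∧ d x = 1}.Finite :=
    (Set.finite_Iio z).subset (fun x hx => hx.1)
  have hmem : a ∈ {x | x < z ∧ d x = 1} := ⟨by omega, hda⟩
  have hn1 : 0 < {x | x < z ∧ d x = 1}.ncard := (Set.ncard_pos hfin).2 ⟨a, hmem⟩
  have hcard' : {x | x < z ∧ d' x = 1}.ncard = {x | x < z ∧ d x = 1}.ncard - 1 := by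
    rw [hS']
    exact Set.ncard_diff_singleton_of_mem hmem
  set n := {x | x < z ∧ d x = 1}.ncard with hndef
  have hF : F2 d = ((n % 2 : ℕ) : ℝ) := by rw [F2, Zset_ncard d z hzeros]
  have hF' : F2 d' = (((n - 1) % 2 : ℕ) : ℝ) := by
    rw [F2, Zset_ncard d' z hzeros', hcard']
  rcases Nat.even_or_odd n with he | ho
  · left
    have h1 : n % 2 = 0 := Nat.even_iff.1 he
    have h2 : (n - 1) % 2 = 1 := by omega
    exact ⟨by rw [hF, h1]; norm_num, by rw [hF', h2]; norm_num⟩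
  · right
    have h1 : n % 2 = 1 := Nat.odd_iff.1 ho
    have h2 : (n - 1) % 2 = 0 := by omega
    exact ⟨by rw [hF, h1]; norm_num, by rw [hF', h2]; norm_num⟩

/-! ### glue -/

theorem coloring_leftInv {m : ℕ} (c₀ : ℕ → Fin m) {g h : Equiv.Perm ℕ}
    (hu : g⁻¹ * h ∈ Uc c₀) : (fun x => c₀ (g⁻¹ x)) = (fun x => c₀ (h⁻¹ x)) := by
  funext x
  have := hu (h⁻¹ x)
  rw [Equiv.Perm.mul_apply, perm_apply_inv_self] at this
  exact this

noncomputable def f1 : Equiv.Perm ℕ → ℝ := fun g => F1 (fun x => pat3 (g⁻¹ x))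

theorem f1_leftInv {g h : Equiv.Perm ℕ} (hu : g⁻¹ * h ∈ Uc pat3) : f1 g = f1 h :=
  congrArg F1 (coloring_leftInv pat3 hu)

theorem perm_diff_finite {m : ℕ} (c₀ : ℕ → Fin m) (g s : Equiv.Perm ℕ)
    (hs : s ∈ finitaryS) :
    {x | c₀ (((g * s)⁻¹ : Equiv.Perm ℕ) x) ≠ c₀ ((g⁻¹ : Equiv.Perm ℕ) x)}.Finite := by
  have hs' : {y | s⁻¹ y ≠ y}.Finite := finitaryS.inv_mem hs
  have hsub : {x | c₀ (((g * s)⁻¹ : Equiv.Perm ℕ) x) ≠ c₀ ((g⁻¹ : Equiv.Perm ℕ) x)} ⊆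
      (fun x => (g⁻¹ : Equiv.Perm ℕ) x) ⁻¹' {y | s⁻¹ y ≠ y} := by
    intro x hx
    simp only [Set.mem_preimage, Set.mem_setOf_eq]
    intro heq
    apply hx
    rw [mul_inv_rev, Equiv.Perm.mul_apply, heq]
  exact (hs'.preimage (fun y _ z _ hyz => (Equiv.injective g⁻¹) hyz)).subset hsub

theorem f1_rightS (g s : Equiv.Perm ℕ) (hs : s ∈ finitaryS) : f1 (g * s) = f1 g :=
  F1_congr (perm_diff_finite pat3 g s hs)

/-- The key witnesses against right uniform continuity of `f1`. -/
theorem main_witness {n : ℕ} (c : ℕ → Fin n) :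
    ∃ g h : Equiv.Perm ℕ, g * h⁻¹ ∈ Uc c ∧ f1 g = 0 ∧ f1 h = 1 := by
  obtain ⟨k, hk⟩ := exists_infinite_fiber c
  set p := fun x => c x = k with hpdef
  letI : DecidablePred p := Classical.decPred p
  have hp : {x | p x}.Infinite := hk
  have hd := dOf_fibers p hp pat3 pat3_fibers
  set g : Equiv.Perm ℕ := (recolorPerm (dOf p pat3) pat3 hd pat3_fibers)⁻¹ with hgdef
  set σ : Equiv.Perm ℕ :=
    recolorPerm pat6 pat3 pat6_fibers pat3_fibers with hσdef
  set u : Equiv.Perm ℕ := permOnSet p hp σ⁻¹ with hudef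
  refine ⟨g, u * g, ?_, ?_, ?_⟩
  · have huc : g * (u * g)⁻¹ = u⁻¹ := by
      rw [mul_inv_rev, ← mul_assoc, mul_inv_cancel, one_mul]
    rw [huc]
    apply inv_mem_Uc
    intro x
    by_cases hx : p x
    · have h1 : c (permOnSet p hp σ⁻¹ x) = k := permOnSet_mem_of_pos p hp σ⁻¹ hx
      have h2 : c x = k := hx
      exact h1.trans h2.symm
    · rw [permOnSet_apply_of_neg p hp σ⁻¹ hx]
  · have : (fun x => pat3 (g⁻¹ x)) = dOf p pat3 := by
      funext x
      rw [hgdef, inv_inv]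
      exact recolorPerm_spec (dOf p pat3) pat3 hd pat3_fibers x
    rw [f1, this]
    exact F1_pat3 p hp
  · have : (fun x => pat3 ((u * g)⁻¹ x)) = dOf p pat6 := by
      funext x
      rw [mul_inv_rev, Equiv.Perm.mul_apply]
      by_cases hx : p x
      · rw [permOnSet_inv_apply_of_pos p hp σ⁻¹ hx]
        have hmem : p (Nat.nth p ((σ⁻¹).symm (Nat.count p x))) :=
          Nat.nth_mem_of_infinite hp _
        have h1 : pat3 (g⁻¹ (Nat.nth p ((σ⁻¹).symm (Nat.count p x))))
            = dOf p pat3 (Nat.nth p ((σ⁻¹).symm (Nat.count p x))) := by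
          rw [hgdef, inv_inv]
          exact recolorPerm_spec (dOf p pat3) pat3 hd pat3_fibers _
        rw [h1, dOf, if_pos hmem, Nat.count_nth_of_infinite hp]
        have h2 : (σ⁻¹).symm = σ := rfl
        rw [h2]
        have h3 : pat3 (σ (Nat.count p x)) = pat6 (Nat.count p x) :=
          recolorPerm_spec pat6 pat3 pat6_fibers pat3_fibers _
        rw [h3, dOf, if_pos hx]
      · rw [permOnSet_inv_apply_of_neg p hp σ⁻¹ hx]
        have h1 : pat3 (g⁻¹ x) = dOf p pat3 x := by
          rw [hgdef, inv_inv]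
          exact recolorPerm_spec (dOf p pat3) pat3 hd pat3_fibers _
        rw [h1, dOf, if_neg hx, dOf, if_neg hx]
    rw [f1, this]
    exact F1_pat6 p hp

/-! ### the S-case -/

theorem swap_mem_finitaryS (i j : ℕ) : Equiv.swap i j ∈ finitaryS := by
  show {x | Equiv.swap i j x ≠ x}.Finite
  refine ((Set.finite_singleton j).insert i).subset ?_
  intro x hx
  simp only [Set.mem_setOf_eq] at hx
  by_contra hmem
  simp only [Set.mem_insert_iff, Set.mem_singleton_iff, not_or] at hmem
  exact hx (swap_ne_fixed hmem.1 hmem.2)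

noncomputable def f2 : Equiv.Perm ℕ → ℝ := fun g => F2 (fun x => c2 (g⁻¹ x))

theorem s_witness {n : ℕ} (c : ℕ → Fin n) :
    ∃ g h : Equiv.Perm ℕ, g ∈ finitaryS ∧ h ∈ finitaryS ∧ g * h⁻¹ ∈ Uc c ∧
      ((f2 g = 0 ∧ f2 h = 1) ∨ (f2 g = 1 ∧ f2 h = 0)) := by
  obtain ⟨k, hk⟩ := exists_infinite_fiber c
  obtain ⟨a, ha, hapos⟩ := hk.exists_gt 0
  obtain ⟨a', ha', haa⟩ := hk.exists_gt (a + 1)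
  set π : Equiv.Perm ℕ :=
    Equiv.swap 0 (a+1) * Equiv.swap a (2*a'+3) * Equiv.swap a' (2*a'+4) with hπdef
  set u : Equiv.Perm ℕ := Equiv.swap a a' with hudef
  refine ⟨π⁻¹, u * π⁻¹, ?_, ?_, ?_, ?_⟩
  · exact finitaryS.inv_mem (mul_mem (mul_mem (swap_mem_finitaryS _ _)
      (swap_mem_finitaryS _ _)) (swap_mem_finitaryS _ _))
  · exact mul_mem (swap_mem_finitaryS _ _) (finitaryS.inv_mem (mul_mem (mul_mem
      (swap_mem_finitaryS _ _) (swap_mem_finitaryS _ _)) (swap_mem_finitaryS _ _)))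
  · have huc : π⁻¹ * (u * π⁻¹)⁻¹ = u⁻¹ := by
      group
    rw [huc]
    apply inv_mem_Uc
    intro x
    rcases eq_or_ne x a with rfl | hxa
    · rw [hudef, Equiv.swap_apply_left]
      exact ha'.trans ha.symm
    rcases eq_or_ne x a' with rfl | hxa'
    · rw [hudef, Equiv.swap_apply_right]
      exact ha.trans ha'.symm
    · rw [hudef, swap_ne_fixed hxa hxa']
  · have h1 : f2 π⁻¹ = F2 (fun x => c2 (π x)) := by rw [f2, inv_inv]
    have h2 : f2 (u * π⁻¹) = F2 (fun x => c2 (π (Equiv.swap a a' x))) := by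
      rw [f2, mul_inv_rev, inv_inv]
      congr 1
    rw [h1, h2]
    exact S_witness a a' hapos haa

/-! ### the quotient case -/

def Oset : Set (Equiv.Perm ℕ) := {w | ∃ u ∈ Uc pat3, ∃ s ∈ finitaryS, w = u * s}

theorem one_mem_Oset : (1 : Equiv.Perm ℕ) ∈ Oset :=
  ⟨1, one_mem_Uc pat3, 1, one_mem _, (mul_one 1).symm⟩

theorem Oset_absorb {w : Equiv.Perm ℕ} (hw : w ∈ Oset) {s : Equiv.Perm ℕ}
    (hs : s ∈ finitaryS) : w * s ∈ Oset := by
  obtain ⟨u, hu, s', hs', rfl⟩ := hw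
  exact ⟨u, hu, s' * s, mul_mem hs' hs, (mul_assoc u s' s).symm⟩

theorem Oset_open : @IsOpen _ tauPerm Oset := by
  letI := tauPerm
  rw [isOpen_iff_mem_nhds]
  intro v hv
  refine Filter.mem_of_superset (coset_mem_nhds pat3 v) ?_
  intro h hh
  obtain ⟨u, hu, s, hs, hv'⟩ := hv
  have h1 : h * v⁻¹ ∈ Uc pat3 := by
    intro x
    rw [Equiv.Perm.mul_apply, hh (v⁻¹ x), perm_apply_inv_self]
  refine ⟨h * v⁻¹ * u, mul_mem_Uc h1 hu, s, hs, ?_⟩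
  rw [mul_assoc, ← hv', mul_assoc, inv_mul_cancel, mul_one]

theorem Oset_saturated :
    (QuotientGroup.mk : Equiv.Perm ℕ → Equiv.Perm ℕ ⧸ finitaryS) ⁻¹'
      (QuotientGroup.mk '' Oset) = Oset := by
  apply Set.Subset.antisymm
  · intro x hx
    obtain ⟨o, ho, heq⟩ := hx
    have : o⁻¹ * x ∈ finitaryS := (QuotientGroup.eq).1 heq
    have hxeq : x = o * (o⁻¹ * x) := by rw [← mul_assoc, mul_inv_cancel, one_mul]
    rw [hxeq]
    exact Oset_absorb ho this
  · exact Set.subset_preimage_image _ _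

noncomputable def fbar : (Equiv.Perm ℕ ⧸ finitaryS) → ℝ := fun q =>
  Quotient.liftOn' q f1 (by
    intro x y hxy
    have h : x⁻¹ * y ∈ finitaryS := (QuotientGroup.leftRel_apply).1 hxy
    have : y = x * (x⁻¹ * y) := by rw [← mul_assoc, mul_inv_cancel, one_mul]
    rw [this, f1_rightS x _ h])

theorem fbar_mk (g : Equiv.Perm ℕ) : fbar (QuotientGroup.mk g) = f1 g := rfl

theorem dist_mem : {p : ℝ × ℝ | dist p.1 p.2 < 1} ∈ uniformity ℝ :=
  Metric.dist_mem_uniformity one_pos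

theorem notFSIN_G : NotFSIN tauPerm := by
  refine ⟨f1, ⟨1, fun g => F1_bound _⟩, ?_, ?_⟩
  · intro V hV
    refine ⟨Uc pat3, Uc_mem_nhds pat3, fun g h hu => ?_⟩
    rw [f1_leftInv hu]
    exact refl_mem_uniformity hV
  · intro hR
    obtain ⟨U, hU, hprop⟩ := hR _ dist_mem
    obtain ⟨n, c, hsub⟩ := exists_Uc_subset hU
    obtain ⟨g, h, hmem, h0, h1⟩ := main_witness c
    have := hprop g h (hsub hmem)
    rw [h0, h1] at this
    simp only [Set.mem_setOf_eq, Real.dist_eq] at this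
    norm_num at this

theorem notFSIN_S :
    NotFSIN (TopologicalSpace.induced (Subtype.val : ↥finitaryS → Equiv.Perm ℕ) tauPerm) := by
  letI := tauPerm
  refine ⟨fun σ => f2 (σ : Equiv.Perm ℕ), ⟨1, fun g => F2_bound _⟩, ?_, ?_⟩
  · intro V hV
    refine ⟨Subtype.val ⁻¹' (Uc c2), ?_, fun g h hu => ?_⟩
    · rw [nhds_induced]
      exact Filter.preimage_mem_comap (Uc_mem_nhds c2)
    · have hu' : (g : Equiv.Perm ℕ)⁻¹ * (h : Equiv.Perm ℕ) ∈ Uc c2 := hu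
      have : f2 (g : Equiv.Perm ℕ) = f2 (h : Equiv.Perm ℕ) :=
        congrArg F2 (coloring_leftInv c2 hu')
      show (f2 (g : Equiv.Perm ℕ), f2 (h : Equiv.Perm ℕ)) ∈ V
      rw [this]
      exact refl_mem_uniformity hV
  · intro hR
    obtain ⟨U, hU, hprop⟩ := hR _ dist_mem
    rw [nhds_induced, Filter.mem_comap] at hU
    obtain ⟨W, hW, hWU⟩ := hU
    obtain ⟨n, c, hsub⟩ := exists_Uc_subset hW
    obtain ⟨g, h, hg, hh, hmem, hval⟩ := s_witness c
    have hUmem : (⟨g, hg⟩ : ↥finitaryS) * (⟨h, hh⟩ : ↥finitaryS)⁻¹ ∈ U := by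
      apply hWU
      simp only [Set.mem_preimage]
      exact hsub hmem
    have := hprop _ _ hUmem
    simp only [Set.mem_setOf_eq, Real.dist_eq] at this
    rcases hval with ⟨h0, h1⟩ | ⟨h0, h1⟩ <;>
      · simp only [h0, h1] at this
        norm_num at this

theorem notFSIN_Q :
    NotFSIN (TopologicalSpace.coinduced
      (QuotientGroup.mk : Equiv.Perm ℕ → Equiv.Perm ℕ ⧸ finitaryS) tauPerm) := by
  letI := tauPerm
  letI tq : TopologicalSpace (Equiv.Perm ℕ ⧸ finitaryS) :=
    TopologicalSpace.coinduced QuotientGroup.mk tauPerm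
  have hopen : IsOpen (QuotientGroup.mk '' Oset : Set (Equiv.Perm ℕ ⧸ finitaryS)) := by
    rw [isOpen_coinduced, Oset_saturated]
    exact Oset_open
  refine ⟨fbar, ⟨1, fun q => ?_⟩, ?_, ?_⟩
  · induction q using Quotient.inductionOn' with
    | h g => exact F1_bound _
  · intro V hV
    refine ⟨QuotientGroup.mk '' Oset, hopen.mem_nhds ⟨1, one_mem_Oset, rfl⟩, ?_⟩
    intro q1 q2 hq
    induction q1 using Quotient.inductionOn' with
    | h a =>
    induction q2 using Quotient.inductionOn' with
    | h b =>
    have hab : (QuotientGroup.mk (a⁻¹ * b) : Equiv.Perm ℕ ⧸ finitaryS) ∈ QuotientGroup.mk '' Oset := by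
      have h2 : ((QuotientGroup.mk (a⁻¹ * b) : Equiv.Perm ℕ ⧸ finitaryS))
          = (QuotientGroup.mk a)⁻¹ * QuotientGroup.mk b := by
        rw [QuotientGroup.mk_mul, QuotientGroup.mk_inv]
      rw [h2]
      exact hq
    have hmem : a⁻¹ * b ∈ Oset := by
      rw [← Oset_saturated]; exact hab
    obtain ⟨u, hu, s, hs, heq⟩ := hmem
    have hb : b = (a * u) * s := by
      have h2 : a * (a⁻¹ * b) = b := by group
      rw [← h2, heq, ← mul_assoc]
    have : fbar (Quotient.mk'' a) = fbar (Quotient.mk'' b) := by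
      show f1 a = f1 b
      rw [hb, f1_rightS _ _ hs]
      exact f1_leftInv (by simpa using hu)
    rw [this]
    exact refl_mem_uniformity hV
  · intro hR
    obtain ⟨U, hU, hprop⟩ := hR _ dist_mem
    obtain ⟨O', hO'U, hO'open, h1O'⟩ := mem_nhds_iff.1 hU
    have hpre : QuotientGroup.mk ⁻¹' U ∈ @nhds _ tauPerm 1 := by
      rw [mem_nhds_iff]
      refine ⟨QuotientGroup.mk ⁻¹' O', Set.preimage_mono hO'U, ?_, ?_⟩
      · exact (isOpen_coinduced).1 hO'open
      · show QuotientGroup.mk (1 : Equiv.Perm ℕ) ∈ O'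
        simpa using h1O'
    obtain ⟨n, c, hsub⟩ := exists_Uc_subset hpre
    obtain ⟨g, h, hmem, h0, h1⟩ := main_witness c
    have hq : (QuotientGroup.mk g : Equiv.Perm ℕ ⧸ finitaryS) *
        (QuotientGroup.mk h)⁻¹ ∈ U := by
      have : (QuotientGroup.mk g : Equiv.Perm ℕ ⧸ finitaryS) * (QuotientGroup.mk h)⁻¹
          = QuotientGroup.mk (g * h⁻¹) := rfl
      rw [this]
      exact hsub hmem
    have := hprop _ _ hq
    rw [fbar_mk, fbar_mk, h0, h1] at this
    simp only [Set.mem_setOf_eq, Real.dist_eq] at this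
    norm_num at this


/-- Proposition 3.6 (first part): none of the topological groups `(G, τ)`, `(S, τ|S)` and
`G/S` (with the quotient topology) is FSIN. -/
theorem stmt_19 :
    NotFSIN tauPerm ∧
      NotFSIN (TopologicalSpace.induced (Subtype.val : ↥finitaryS → Equiv.Perm ℕ) tauPerm) ∧
      NotFSIN (TopologicalSpace.coinduced
        (QuotientGroup.mk : Equiv.Perm ℕ → Equiv.Perm ℕ ⧸ finitaryS) tauPerm) :=
  ⟨notFSIN_G, notFSIN_S, notFSIN_Q⟩
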